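/- Let d̄ = (d_1, ..., d_n) be a sequence of positive integers with 1 ≤ d_i ≤ n for all i. If the number of indices i with d_i = 1 is at least max(d̄) and the number of indices i with d_i = 2 is at least max(d̄), then d̄ is balanced, i.e., there exists a partition {1, ..., n} = I ⊔ J into disjoint sets whose cardinalities differ by at most 1 such that |Σ_{k∈I} d_k − Σ_{k∈J} d_k| ≤ 2. -/

import Mathlib

open Finset

/-- Among the elements of `[a, b) ∩ [0, n)` with residue `p` mod 2 there are
at least `(b - a) / 2` elements. -/
lemma parity_count_aux (n a b p : ℕ) (hb : b ≤ n) (hp : p < 2) :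
    (b - a) / 2 ≤ ((Finset.range n).filter (fun j => j % 2 = p ∧ a ≤ j ∧ j < b)).card := by
  classical
  have h := Finset.card_le_card_of_injOn (s := Finset.range ((b - a) / 2))
    (t := (Finset.range n).filter (fun j => j % 2 = p ∧ a ≤ j ∧ j < b))
    (fun j => a + (a + p) % 2 + 2 * j)
    (by
      intro j hj
      simp only [Finset.mem_coe, Finset.mem_range] at hj
      simp only [Finset.mem_coe, Finset.mem_filter, Finset.mem_range]
      omega)
    (by
      intro x hx y hy hxy
      simp only at hxy
      omega)
  simpa using h

/-- A downward-closed subset of `Fin n` is an initial segment. -/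
lemma mem_iff_lt_card_of_lower {n : ℕ} (S : Finset (Fin n))
    (hS : ∀ i j : Fin n, i ≤ j → j ∈ S → i ∈ S) (i : Fin n) :
    i ∈ S ↔ (i : ℕ) < S.card := by
  constructor
  · intro hi
    have h : Finset.Iic i ⊆ S := fun j hj => hS j i (Finset.mem_Iic.mp hj) hi
    have hc := Finset.card_le_card h
    rw [Fin.card_Iic] at hc
    omega
  · intro hi
    by_contra hmem
    have h : S ⊆ Finset.Iio i := by
      intro j hj
      rw [Finset.mem_Iio]
      by_contra hji
      exact hmem (hS i j (le_of_not_gt hji) hj)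
    have hc := Finset.card_le_card h
    rw [Fin.card_Iio] at hc
    omega

/-- Alternating sum bounds for a monotone nonnegative sequence, where the
top index gets a `+` sign. -/
lemma alt_sum_bounds (E : ℕ → ℤ) :
    ∀ n : ℕ, 1 ≤ n → (∀ i j, i ≤ j → j < n → E i ≤ E j) → (∀ i, i < n → 0 ≤ E i) →
    0 ≤ (∑ i ∈ Finset.range n, if i % 2 = (n - 1) % 2 then E i else -E i) ∧
    (∑ i ∈ Finset.range n, if i % 2 = (n - 1) % 2 then E i else -E i) ≤ E (n - 1) := by
  intro n
  induction n with
  | zero => omega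
  | succ m ih =>
    intro _ hmono hpos
    rcases Nat.eq_zero_or_pos m with hm | hm
    · subst hm
      constructor
      · simpa using hpos 0 (by omega)
      · simp
    · have hcongr : ∀ i ∈ Finset.range m,
          (if i % 2 = (m + 1 - 1) % 2 then E i else -E i)
            = -(if i % 2 = (m - 1) % 2 then E i else -E i) := by
        intro i _
        have hm2 : ¬ (m % 2 = (m - 1) % 2) := by omega
        have hm2' : ¬ ((m - 1) % 2 = m % 2) := by omega
        by_cases h : i % 2 = m % 2
        · have h2 : ¬ (i % 2 = (m - 1) % 2) := by omega
          simp [h, h2, hm2, hm2']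
        · have h2 : i % 2 = (m - 1) % 2 := by omega
          simp [h, h2, hm2, hm2']
      have hstep : (∑ i ∈ Finset.range (m + 1),
            if i % 2 = (m + 1 - 1) % 2 then E i else -E i)
          = E m - (∑ i ∈ Finset.range m, if i % 2 = (m - 1) % 2 then E i else -E i) := by
        rw [Finset.sum_range_succ, Finset.sum_congr rfl hcongr, Finset.sum_neg_distrib]
        simp
        ring
      have hIH := ih hm (fun i j hij hj => hmono i j hij (by omega))
        (fun i hi => hpos i (by omega))
      have hEm : E (m - 1) ≤ E m := hmono (m - 1) m (by omega) (by omega)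
      rw [hstep]
      constructor
      · linarith [hIH.2]
      · have : E m - (∑ i ∈ Finset.range m,
            if i % 2 = (m - 1) % 2 then E i else -E i) ≤ E m := by linarith [hIH.1]
        simpa using this

/-- Transfer cardinalities of filters on `Fin n` to filters on `range n`. -/
lemma card_filter_fin_eq (n : ℕ) (Q : ℕ → Prop) [DecidablePred Q] :
    (Finset.univ.filter (fun i : Fin n => Q (i : ℕ))).card
      = ((Finset.range n).filter Q).card := by
  rw [Finset.card_filter, Finset.card_filter]
  exact Fin.sum_univ_eq_sum_range (fun j => if Q j then 1 else 0) n

theorem balanced_of_many_ones_and_twos (n : ℕ) (d : Fin n → ℕ)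
    (hle : ∀ i, 1 ≤ d i ∧ d i ≤ n)
    (h1 : Finset.univ.sup d ≤ (Finset.univ.filter (fun i => d i = 1)).card)
    (h2 : Finset.univ.sup d ≤ (Finset.univ.filter (fun i => d i = 2)).card) :
    ∃ I : Finset (Fin n),
      |(I.card : ℤ) - ((Iᶜ : Finset (Fin n)).card : ℤ)| ≤ 1 ∧
      |(∑ k ∈ I, (d k : ℤ)) - ∑ k ∈ (Iᶜ : Finset (Fin n)), (d k : ℤ)| ≤ 2 := by
  classical
  rcases Nat.eq_zero_or_pos n with hn0 | hn0
  · subst hn0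
    refine ⟨∅, ?_, ?_⟩ <;> simp
  set M := Finset.univ.sup d with hM
  set σ := Tuple.sort d with hσ
  set e : Fin n → ℕ := fun i => d (σ i) with he
  have hmono : Monotone e := Tuple.monotone_sort d
  have he1 : ∀ i, 1 ≤ e i := fun i => (hle (σ i)).1
  have heM : ∀ i, e i ≤ M := fun i => Finset.le_sup (Finset.mem_univ (σ i))
  set c1 := (univ.filter (fun i => e i = 1)).card with hc1def
  set c2 := (univ.filter (fun i => e i = 2)).card with hc2def
  have hc1 : M ≤ c1 := by
    have heq : (univ.filter (fun i => e i = 1)).card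
        = (univ.filter (fun i => d i = 1)).card :=
      Finset.card_equiv σ (by intro i; simp [he])
    omega
  have hc2 : M ≤ c2 := by
    have heq : (univ.filter (fun i => e i = 2)).card
        = (univ.filter (fun i => d i = 2)).card :=
      Finset.card_equiv σ (by intro i; simp [he])
    omega
  -- characterization of positions of ones and twos
  have hone : ∀ i : Fin n, e i = 1 ↔ (i : ℕ) < c1 := by
    intro i
    have := mem_iff_lt_card_of_lower (univ.filter (fun i => e i = 1))
      (by
        intro a b hab hb
        simp only [Finset.mem_filter, Finset.mem_univ, true_and] at hb ⊢
        have h1a := he1 a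
        have h2a := hmono hab
        omega) i
    simpa using this
  have hle2 : ∀ i : Fin n, e i ≤ 2 ↔ (i : ℕ) < c1 + c2 := by
    have hsplit : (univ.filter fun i : Fin n => e i ≤ 2)
        = (univ.filter fun i => e i = 1) ∪ (univ.filter fun i => e i = 2) := by
      ext i
      simp only [Finset.mem_filter, Finset.mem_union, Finset.mem_univ, true_and]
      have := he1 i
      omega
    have hdisj : Disjoint (univ.filter fun i : Fin n => e i = 1)
        (univ.filter fun i : Fin n => e i = 2) := by
      rw [Finset.disjoint_left]
      intro a ha hb
      simp only [Finset.mem_filter] at ha hb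
      omega
    have hcard : (univ.filter fun i : Fin n => e i ≤ 2).card = c1 + c2 := by
      rw [hsplit, Finset.card_union_of_disjoint hdisj]
    intro i
    have := mem_iff_lt_card_of_lower (univ.filter (fun i => e i ≤ 2))
      (by
        intro a b hab hb
        simp only [Finset.mem_filter, Finset.mem_univ, true_and] at hb ⊢
        have h2a := hmono hab
        omega) i
    rw [hcard] at this
    simpa using this
  have htwo : ∀ i : Fin n, e i = 2 ↔ (c1 ≤ (i : ℕ) ∧ (i : ℕ) < c1 + c2) := by
    intro i
    have ha := hone i
    have hb := hle2 i
    have := he1 i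
    omega
  have hc12n : c1 + c2 ≤ n := by
    have h := Finset.card_le_card (Finset.filter_subset (fun i : Fin n => e i ≤ 2) univ)
    have hcard : (univ.filter fun i : Fin n => e i ≤ 2).card = c1 + c2 := by
      have hi := fun i : Fin n => hle2 i
      -- recompute via the characterization is circular; redo the split
      have hsplit : (univ.filter fun i : Fin n => e i ≤ 2)
          = (univ.filter fun i => e i = 1) ∪ (univ.filter fun i => e i = 2) := by
        ext i
        simp only [Finset.mem_filter, Finset.mem_union, Finset.mem_univ, true_and]
        have := he1 i
        omega
      have hdisj : Disjoint (univ.filter fun i : Fin n => e i = 1)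
          (univ.filter fun i : Fin n => e i = 2) := by
        rw [Finset.disjoint_left]
        intro a ha hb
        simp only [Finset.mem_filter] at ha hb
        omega
      rw [hsplit, Finset.card_union_of_disjoint hdisj]
    rw [hcard] at h
    simpa using h
  -- parity split
  set p := (n - 1) % 2 with hp
  have hp2 : p < 2 := by omega
  set H : Finset (Fin n) := univ.filter (fun i : Fin n => (i : ℕ) % 2 = p) with hH
  have hHc : Hᶜ = univ.filter (fun i : Fin n => ¬ ((i : ℕ) % 2 = p)) := by
    rw [hH, Finset.compl_filter]
  -- cardinalities of the parity classes
  have hHcard : n / 2 ≤ H.card := by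
    rw [hH, card_filter_fin_eq n (fun j => j % 2 = p)]
    have h := parity_count_aux n 0 n p le_rfl hp2
    rw [Nat.sub_zero] at h
    refine le_trans h (Finset.card_le_card ?_)
    exact Finset.monotone_filter_right _ (fun j _ hj => hj.1)
  have hHccard : n / 2 ≤ Hᶜ.card := by
    rw [hHc]
    have hcongr : (univ.filter (fun i : Fin n => ¬ ((i : ℕ) % 2 = p)))
        = (univ.filter (fun i : Fin n => (i : ℕ) % 2 = 1 - p)) := by
      ext i
      simp only [Finset.mem_filter, Finset.mem_univ, true_and]
      omega
    rw [hcongr, card_filter_fin_eq n (fun j => j % 2 = 1 - p)]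
    have h := parity_count_aux n 0 n (1 - p) le_rfl (by omega)
    rw [Nat.sub_zero] at h
    refine le_trans h (Finset.card_le_card ?_)
    exact Finset.monotone_filter_right _ (fun j _ hj => hj.1)
  have hHcompl : Hᶜ.card = n - H.card := by
    rw [Finset.card_compl, Fintype.card_fin]
  have hHn : H.card ≤ n := by
    have := Finset.card_le_card (Finset.subset_univ H)
    simpa using this
  -- the alternating difference D
  set E : ℕ → ℤ := fun j => if h : j < n then (e ⟨j, h⟩ : ℤ) else 0 with hE
  set D : ℤ := ∑ i ∈ Finset.range n, (if i % 2 = p then E i else -E i) with hD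
  have hEmono : ∀ i j, i ≤ j → j < n → E i ≤ E j := by
    intro i j hij hj
    have hi : i < n := lt_of_le_of_lt hij hj
    rw [hE]
    simp only [dif_pos hi, dif_pos hj]
    exact_mod_cast hmono (show (⟨i, hi⟩ : Fin n) ≤ ⟨j, hj⟩ from hij)
  have hEpos : ∀ i, i < n → 0 ≤ E i := by
    intro i hi
    rw [hE]
    simp only [dif_pos hi]
    positivity
  have hDbounds : 0 ≤ D ∧ D ≤ E (n - 1) :=
    alt_sum_bounds E n hn0 hEmono hEpos
  have hEtop : E (n - 1) ≤ (M : ℤ) := by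
    rw [hE]
    have h : n - 1 < n := by omega
    simp only [dif_pos h]
    exact_mod_cast heM _
  have hD0 : 0 ≤ D := hDbounds.1
  have hDM : D ≤ (M : ℤ) := le_trans hDbounds.2 hEtop
  -- relate D to sums over H and Hᶜ
  set Sh : ℤ := ∑ i ∈ H, (e i : ℤ) with hSh
  set Sc : ℤ := ∑ i ∈ Hᶜ, (e i : ℤ) with hSc
  have hsumD : Sh - Sc = D := by
    have hfun : ∀ i : Fin n,
        (if (i : ℕ) % 2 = p then E (i : ℕ) else -E (i : ℕ))
          = (if (i : ℕ) % 2 = p then (e i : ℤ) else -(e i : ℤ)) := by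
      intro i
      have : E (i : ℕ) = (e i : ℤ) := by
        rw [hE]
        simp only [dif_pos i.isLt, Fin.eta]
      rw [this]
    have h0 : D = ∑ i : Fin n, (if (i : ℕ) % 2 = p then (e i : ℤ) else -(e i : ℤ)) := by
      rw [hD, ← Fin.sum_univ_eq_sum_range (fun j => if j % 2 = p then E j else -E j) n]
      exact Finset.sum_congr rfl (fun i _ => hfun i)
    have h1' : ∑ i ∈ H, (if (i : ℕ) % 2 = p then (e i : ℤ) else -(e i : ℤ)) = Sh := by
      apply Finset.sum_congr rfl
      intro i hi
      rw [hH, Finset.mem_filter] at hi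
      rw [if_pos hi.2]
    have h2' : ∑ i ∈ Hᶜ, (if (i : ℕ) % 2 = p then (e i : ℤ) else -(e i : ℤ)) = -Sc := by
      rw [hSc, ← Finset.sum_neg_distrib]
      apply Finset.sum_congr rfl
      intro i hi
      rw [hHc, Finset.mem_filter] at hi
      rw [if_neg hi.2]
    have h3 : ∑ i ∈ H, (if (i : ℕ) % 2 = p then (e i : ℤ) else -(e i : ℤ))
        + ∑ i ∈ Hᶜ, (if (i : ℕ) % 2 = p then (e i : ℤ) else -(e i : ℤ))
        = ∑ i : Fin n, (if (i : ℕ) % 2 = p then (e i : ℤ) else -(e i : ℤ)) :=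
      Finset.sum_add_sum_compl H _
    rw [h0, ← h3, h1', h2']
    ring
  -- choose the swap sets
  set k : ℕ := D.toNat / 2 with hk
  have hkM : k ≤ M / 2 := by
    have : D.toNat ≤ M := by omega
    rw [hk]
    exact Nat.div_le_div_right this
  -- twos on the heavy side
  have hTcount : k ≤ (univ.filter (fun i : Fin n => (i : ℕ) % 2 = p ∧ e i = 2)).card := by
    have hcongr : (univ.filter (fun i : Fin n => (i : ℕ) % 2 = p ∧ e i = 2))
        = (univ.filter (fun i : Fin n =>
            (i : ℕ) % 2 = p ∧ c1 ≤ (i : ℕ) ∧ (i : ℕ) < c1 + c2)) := by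
      ext i
      simp only [Finset.mem_filter, Finset.mem_univ, true_and]
      have := htwo i
      tauto
    rw [hcongr, card_filter_fin_eq n (fun j => j % 2 = p ∧ c1 ≤ j ∧ j < c1 + c2)]
    have h := parity_count_aux n c1 (c1 + c2) p hc12n hp2
    have : c2 / 2 ≤ ((Finset.range n).filter
        (fun j => j % 2 = p ∧ c1 ≤ j ∧ j < c1 + c2)).card := by
      have hc2eq : (c1 + c2 - c1) / 2 = c2 / 2 := by omega
      rwa [hc2eq] at h
    omega
  -- ones on the light side
  have hOcount : k ≤ (univ.filter (fun i : Fin n =>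
      ¬ ((i : ℕ) % 2 = p) ∧ e i = 1)).card := by
    have hcongr : (univ.filter (fun i : Fin n => ¬ ((i : ℕ) % 2 = p) ∧ e i = 1))
        = (univ.filter (fun i : Fin n =>
            (i : ℕ) % 2 = 1 - p ∧ 0 ≤ (i : ℕ) ∧ (i : ℕ) < c1)) := by
      ext i
      simp only [Finset.mem_filter, Finset.mem_univ, true_and]
      have := hone i
      omega
    rw [hcongr, card_filter_fin_eq n (fun j => j % 2 = 1 - p ∧ 0 ≤ j ∧ j < c1)]
    have h := parity_count_aux n 0 c1 (1 - p) (by omega) (by omega)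
    have hc1eq : (c1 - 0) / 2 = c1 / 2 := by omega
    rw [hc1eq] at h
    omega
  obtain ⟨T, hTsub, hTcard⟩ := Finset.exists_subset_card_eq hTcount
  obtain ⟨O, hOsub, hOcard⟩ := Finset.exists_subset_card_eq hOcount
  have hTH : T ⊆ H := by
    intro i hi
    have := hTsub hi
    simp only [Finset.mem_filter, Finset.mem_univ, true_and] at this
    rw [hH, Finset.mem_filter]
    exact ⟨Finset.mem_univ i, this.1⟩
  have hT2 : ∀ i ∈ T, e i = 2 := by
    intro i hi
    have := hTsub hi
    simp only [Finset.mem_filter, Finset.mem_univ, true_and] at this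
    exact this.2
  have hOHc : O ⊆ Hᶜ := by
    intro i hi
    have := hOsub hi
    simp only [Finset.mem_filter, Finset.mem_univ, true_and] at this
    rw [hHc, Finset.mem_filter]
    exact ⟨Finset.mem_univ i, this.1⟩
  have hO1 : ∀ i ∈ O, e i = 1 := by
    intro i hi
    have := hOsub hi
    simp only [Finset.mem_filter, Finset.mem_univ, true_and] at this
    exact this.2
  -- build the index set
  set I0 : Finset (Fin n) := (H \ T) ∪ O with hI0
  have hdisj : Disjoint (H \ T) O := by
    rw [Finset.disjoint_left]
    intro a ha hb
    have ha' : a ∈ H := (Finset.mem_sdiff.mp ha).1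
    have hb' : a ∈ Hᶜ := hOHc hb
    exact (Finset.mem_compl.mp hb') ha'
  have hTcardH : T.card ≤ H.card := Finset.card_le_card hTH
  have hI0card : I0.card = H.card := by
    rw [hI0, Finset.card_union_of_disjoint hdisj, Finset.card_sdiff_of_subset hTH, hTcard, hOcard]
    omega
  have hI0sum : ∑ i ∈ I0, (e i : ℤ) = Sh - k := by
    rw [hI0, Finset.sum_union hdisj, Finset.sum_sdiff_eq_sub hTH]
    have hTs : ∑ i ∈ T, (e i : ℤ) = 2 * k := by
      rw [Finset.sum_congr rfl (fun i hi => by rw [hT2 i hi])]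
      simp [hTcard]
      ring
    have hOs : ∑ i ∈ O, (e i : ℤ) = k := by
      rw [Finset.sum_congr rfl (fun i hi => by rw [hO1 i hi])]
      simp [hOcard]
    rw [hTs, hOs, hSh]
    ring
  -- total sum
  have hStot : ∑ i : Fin n, (e i : ℤ) = Sh + Sc := by
    rw [hSh, hSc, Finset.sum_add_sum_compl]
  -- transfer along σ
  refine ⟨I0.map σ.toEmbedding, ?_, ?_⟩
  · rw [Finset.card_map, Finset.card_compl, Finset.card_map, Fintype.card_fin, hI0card]
    rw [abs_le]
    constructor <;> omega
  · have hmap_sum : ∑ j ∈ I0.map σ.toEmbedding, (d j : ℤ) = ∑ i ∈ I0, (e i : ℤ) := by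
      rw [Finset.sum_map]
      rfl
    have htot : ∑ j : Fin n, (d j : ℤ) = Sh + Sc := by
      rw [← hStot]
      exact (Equiv.sum_comp σ (fun j => (d j : ℤ))).symm
    have hcompl_sum : ∑ j ∈ (I0.map σ.toEmbedding)ᶜ, (d j : ℤ) = Sc + k := by
      have h := Finset.sum_add_sum_compl (I0.map σ.toEmbedding) (fun j => (d j : ℤ))
      rw [hmap_sum, hI0sum] at h
      rw [htot] at h
      linarith
    rw [hmap_sum, hI0sum, hcompl_sum]
    have : Sh - (k : ℤ) - (Sc + k) = D - 2 * k := by rw [← hsumD]; ring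
    rw [this]
    rw [abs_le]
    constructor <;> omega
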